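/- arXiv:2008.07693 — 5 statements merged into one kernel-verified Lean document; each statement's English description precedes it below -/
import Mathlib

section
/- Let A ∈ ℝ^{N×M} with N ≤ M have full row rank, let δ₂ be its 2nd restricted isometry constant, and let λ₁ and λ_N denote the minimum and maximum eigenvalues of A Aᵀ, respectively. Then for all i ≠ j in {1,…,M}, 2(1−δ₂)/λ_N ≤ ‖(A Aᵀ)^{−1/2} A (b_i − b_j)‖₂² ≤ 2(1+δ₂)/λ₁, where b_i and b_j are the i-th and j-th standard basis vectors of ℝ^M. -/
open Matrix

/-- The `s`-th restricted isometry constant `δ_s(A)`: the smallest `δ ≥ 0` such that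
`(1−δ)‖x‖₂² ≤ ‖Ax‖₂² ≤ (1+δ)‖x‖₂²` for all `s`-sparse vectors `x`. -/
noncomputable def ric {N M : ℕ} (A : Matrix (Fin N) (Fin M) ℝ) (s : ℕ) : ℝ :=
  sInf {δ : ℝ | 0 ≤ δ ∧ ∀ x : Fin M → ℝ,
    (Finset.univ.filter fun i => x i ≠ 0).card ≤ s →
      (1 - δ) * (∑ i, x i ^ 2) ≤ (∑ k, A.mulVec x k ^ 2) ∧
      (∑ k, A.mulVec x k ^ 2) ≤ (1 + δ) * (∑ i, x i ^ 2)}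

private lemma ric_set_nonempty {N M : ℕ} (A : Matrix (Fin N) (Fin M) ℝ) (s : ℕ) :
    Set.Nonempty {δ : ℝ | 0 ≤ δ ∧ ∀ x : Fin M → ℝ,
    (Finset.univ.filter fun i => x i ≠ 0).card ≤ s →
      (1 - δ) * (∑ i, x i ^ 2) ≤ (∑ k, A.mulVec x k ^ 2) ∧
      (∑ k, A.mulVec x k ^ 2) ≤ (1 + δ) * (∑ i, x i ^ 2)} := by
  refine ⟨1 + ∑ k, ∑ m, A k m ^ 2, by positivity, fun x _ => ?_⟩
  have hs : (0:ℝ) ≤ ∑ i, x i ^ 2 := by positivity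
  have ht : (0:ℝ) ≤ ∑ k, A.mulVec x k ^ 2 := by positivity
  have hF : (0:ℝ) ≤ ∑ k, ∑ m, A k m ^ 2 := by positivity
  constructor
  · have : (1 - (1 + ∑ k, ∑ m, A k m ^ 2)) * (∑ i, x i ^ 2) ≤ 0 :=
      mul_nonpos_of_nonpos_of_nonneg (by linarith) hs
    linarith
  · have hub : (∑ k, A.mulVec x k ^ 2) ≤ (∑ k, ∑ m, A k m ^ 2) * (∑ i, x i ^ 2) := by
      rw [Finset.sum_mul]
      refine Finset.sum_le_sum fun k _ => ?_
      have := Finset.sum_mul_sq_le_sq_mul_sq Finset.univ (fun m => A k m) x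
      simpa [Matrix.mulVec, dotProduct] using this
    nlinarith

private lemma ric_bounds {N M : ℕ} (A : Matrix (Fin N) (Fin M) ℝ) (x : Fin M → ℝ) (s : ℕ)
    (hx : (Finset.univ.filter fun i => x i ≠ 0).card ≤ s) (hs : 0 < ∑ i, x i ^ 2) :
    (1 - ric A s) * (∑ i, x i ^ 2) ≤ (∑ k, A.mulVec x k ^ 2) ∧
    (∑ k, A.mulVec x k ^ 2) ≤ (1 + ric A s) * (∑ i, x i ^ 2) := by
  have hne := ric_set_nonempty A s
  set t := ∑ k, A.mulVec x k ^ 2 with ht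
  set u := ∑ i, x i ^ 2 with hu
  have h1 : 1 - t / u ≤ ric A s := by
    refine le_csInf hne fun b hb => ?_
    have h := (hb.2 x hx).1
    have : (1 - b) ≤ t / u := (le_div_iff₀ hs).mpr h
    linarith
  have h2 : t / u - 1 ≤ ric A s := by
    refine le_csInf hne fun b hb => ?_
    have h := (hb.2 x hx).2
    have : t / u ≤ 1 + b := (div_le_iff₀ hs).mpr h
    linarith
  constructor
  · have h3 : (1 - ric A s) ≤ t / u := by linarith
    have := (le_div_iff₀ hs).mp h3
    linarith
  · have h3 : t / u ≤ 1 + ric A s := by linarith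
    have := (div_le_iff₀ hs).mp h3
    linarith

private lemma quad_inv_bounds {n : ℕ} (Mx : Matrix (Fin n) (Fin n) ℝ) (hM : Mx.IsHermitian)
    (hpos : ∀ k, 0 < hM.eigenvalues k)
    (lam1 lamN : ℝ)
    (hlam1 : IsLeast (Set.range hM.eigenvalues) lam1)
    (hlamN : IsGreatest (Set.range hM.eigenvalues) lamN)
    (v : Fin n → ℝ) :
    (v ⬝ᵥ v) / lamN ≤ v ⬝ᵥ (Mx⁻¹ *ᵥ v) ∧ v ⬝ᵥ (Mx⁻¹ *ᵥ v) ≤ (v ⬝ᵥ v) / lam1 := by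
  obtain ⟨k1, hk1⟩ := hlam1.1
  have hlam1pos : 0 < lam1 := hk1 ▸ hpos k1
  obtain ⟨kN, hkN⟩ := hlamN.1
  have hlamNpos : 0 < lamN := hkN ▸ hpos kN
  set U : Matrix (Fin n) (Fin n) ℝ := (hM.eigenvectorUnitary : Matrix (Fin n) (Fin n) ℝ) with hU
  set d : Fin n → ℝ := hM.eigenvalues with hd
  have hUU : U * star U = 1 := (Matrix.mem_unitaryGroup_iff).mp hM.eigenvectorUnitary.2
  have hUU' : star U * U = 1 := (Matrix.mem_unitaryGroup_iff').mp hM.eigenvectorUnitary.2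
  have hspec : Mx = U * Matrix.diagonal d * star U := by
    have h := hM.spectral_theorem
    simpa using h
  have hinv : Mx⁻¹ = U * Matrix.diagonal (fun k => (d k)⁻¹) * star U := by
    apply Matrix.inv_eq_right_inv
    rw [hspec]
    simp only [Matrix.mul_assoc]
    rw [← Matrix.mul_assoc (star U) U, hUU', Matrix.one_mul,
      ← Matrix.mul_assoc (Matrix.diagonal d), Matrix.diagonal_mul_diagonal]
    have hone : (fun k => d k * (d k)⁻¹) = fun _ => (1:ℝ) := by
      funext k; exact mul_inv_cancel₀ (hpos k).ne'
    rw [hone, Matrix.diagonal_one, Matrix.one_mul, hUU]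
  have hsU : star U = Uᵀ := by
    rw [Matrix.star_eq_conjTranspose, Matrix.conjTranspose_eq_transpose_of_trivial]
  set w : Fin n → ℝ := Uᵀ *ᵥ v with hw
  have hvw : v ⬝ᵥ v = ∑ k, w k ^ 2 := by
    have h1 : ∑ k, w k ^ 2 = w ⬝ᵥ w := by simp [dotProduct, sq]
    rw [h1, hw, Matrix.mulVec_transpose, ← Matrix.dotProduct_mulVec,
      ← Matrix.mulVec_transpose, Matrix.mulVec_mulVec, ← hsU, hUU, Matrix.one_mulVec]
  have hquad : v ⬝ᵥ (Mx⁻¹ *ᵥ v) = ∑ k, (d k)⁻¹ * w k ^ 2 := by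
    rw [hinv, hsU, ← Matrix.mulVec_mulVec, ← Matrix.mulVec_mulVec,
      Matrix.dotProduct_mulVec, ← Matrix.mulVec_transpose, ← hw]
    simp only [dotProduct, Matrix.mulVec_diagonal]
    exact Finset.sum_congr rfl fun k _ => by ring
  have hdlb : ∀ k, lam1 ≤ d k := fun k => hlam1.2 ⟨k, rfl⟩
  have hdub : ∀ k, d k ≤ lamN := fun k => hlamN.2 ⟨k, rfl⟩
  rw [hquad, hvw]
  constructor
  · rw [div_le_iff₀ hlamNpos, Finset.sum_mul]
    refine Finset.sum_le_sum fun k _ => ?_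
    have h1 : lamN⁻¹ ≤ (d k)⁻¹ := inv_anti₀ (hpos k) (hdub k)
    have h2 := mul_le_mul_of_nonneg_right h1 (sq_nonneg (w k))
    calc w k ^ 2 = lamN⁻¹ * w k ^ 2 * lamN := by field_simp
      _ ≤ (d k)⁻¹ * w k ^ 2 * lamN := mul_le_mul_of_nonneg_right h2 hlamNpos.le
  · rw [le_div_iff₀ hlam1pos, Finset.sum_mul]
    refine Finset.sum_le_sum fun k _ => ?_
    have h1 : (d k)⁻¹ ≤ lam1⁻¹ := inv_anti₀ hlam1pos (hdlb k)
    have h2 := mul_le_mul_of_nonneg_right h1 (sq_nonneg (w k))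
    calc (d k)⁻¹ * w k ^ 2 * lam1 ≤ lam1⁻¹ * w k ^ 2 * lam1 :=
        mul_le_mul_of_nonneg_right h2 hlam1pos.le
      _ = w k ^ 2 := by field_simp

/-- let `A ∈ ℝ^{N×M}` (with `N ≤ M`) have full row rank, let `δ₂` be its
2nd restricted isometry constant, let `λ₁` and `λ_N` be the minimum and maximum
eigenvalues of `A Aᵀ`, and let `B` be the positive semidefinite square root of
`(A Aᵀ)⁻¹` (i.e. `B = (A Aᵀ)^{−1/2}`). Then for all `i ≠ j`,
`2(1−δ₂)/λ_N ≤ ‖(A Aᵀ)^{−1/2} A (b_i − b_j)‖₂² ≤ 2(1+δ₂)/λ₁`,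
where `b_i, b_j` are standard basis vectors of `ℝ^M`. -/
theorem stmt_9 {N M : ℕ} (hN : 0 < N) (hNM : N ≤ M)
    (A : Matrix (Fin N) (Fin M) ℝ) (hrank : A.rank = N)
    (hH : (A * Aᵀ).IsHermitian)
    (B : Matrix (Fin N) (Fin N) ℝ) (hBpsd : B.PosSemidef) (hB : B * B = (A * Aᵀ)⁻¹)
    (lam1 lamN : ℝ)
    (hlam1 : IsLeast (Set.range hH.eigenvalues) lam1)
    (hlamN : IsGreatest (Set.range hH.eigenvalues) lamN)
    (i j : Fin M) (hij : i ≠ j) :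
    2 * (1 - ric A 2) / lamN ≤
      ∑ k, B.mulVec (A.mulVec (Pi.single i 1 - Pi.single j 1)) k ^ 2 ∧
    ∑ k, B.mulVec (A.mulVec (Pi.single i 1 - Pi.single j 1)) k ^ 2 ≤
      2 * (1 + ric A 2) / lam1 := by
  set x : Fin M → ℝ := Pi.single i 1 - Pi.single j 1 with hx
  set y : Fin N → ℝ := A.mulVec x with hy
  have hpsd : (A * Aᵀ).PosSemidef := by
    have h := Matrix.posSemidef_self_mul_conjTranspose A
    rwa [Matrix.conjTranspose_eq_transpose_of_trivial] at h
  have hrk : (A * Aᵀ).rank = N := by rw [Matrix.rank_self_mul_transpose, hrank]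
  have hunit : IsUnit (A * Aᵀ) := by
    rw [← Matrix.mulVec_surjective_iff_isUnit]
    have htop : LinearMap.range (A * Aᵀ).mulVecLin = ⊤ := by
      apply Submodule.eq_top_of_finrank_eq
      rw [Module.finrank_fin_fun]
      exact hrk
    have hsurj := LinearMap.range_eq_top.mp htop
    intro z
    obtain ⟨w, hw⟩ := hsurj z
    exact ⟨w, by simpa only [Matrix.mulVecLin_apply] using hw⟩
  have heig : ∀ k, 0 < hH.eigenvalues k := by
    intro k
    rcases lt_or_eq_of_le (hpsd.eigenvalues_nonneg k) with h | h
    · exact h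
    · exfalso
      have hdet : (A * Aᵀ).det ≠ 0 :=
        ((Matrix.isUnit_iff_isUnit_det _).mp hunit).ne_zero
      apply hdet
      rw [hH.det_eq_prod_eigenvalues]
      exact Finset.prod_eq_zero (Finset.mem_univ k) (by simp [← h])
  obtain ⟨k1, hk1⟩ := hlam1.1
  have hlam1pos : 0 < lam1 := hk1 ▸ heig k1
  obtain ⟨kN, hkN⟩ := hlamN.1
  have hlamNpos : 0 < lamN := hkN ▸ heig kN
  -- the sum equals the quadratic form of (A Aᵀ)⁻¹
  have hBt : Bᵀ = B := by
    rw [← Matrix.conjTranspose_eq_transpose_of_trivial]; exact hBpsd.1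
  have key : ∑ k, (B *ᵥ y) k ^ 2 = y ⬝ᵥ ((A * Aᵀ)⁻¹ *ᵥ y) := by
    have h1 : ∑ k, (B *ᵥ y) k ^ 2 = (B *ᵥ y) ⬝ᵥ (B *ᵥ y) := by
      simp [dotProduct, sq]
    have h2 : B *ᵥ y = y ᵥ* B := by
      rw [← hBt, Matrix.mulVec_transpose, hBt]
    rw [h1]
    nth_rewrite 1 [h2]
    rw [← Matrix.dotProduct_mulVec, Matrix.mulVec_mulVec, hB]
  -- sparsity of x
  have hcard : (Finset.univ.filter fun m => x m ≠ 0).card ≤ 2 := by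
    have hsub : (Finset.univ.filter fun m => x m ≠ 0) ⊆ {i, j} := by
      intro m hm
      simp only [Finset.mem_filter] at hm
      by_contra hmem
      simp only [Finset.mem_insert, Finset.mem_singleton, not_or] at hmem
      exact hm.2 (by simp [hx, Pi.single_apply, hmem.1, hmem.2])
    calc (Finset.univ.filter fun m => x m ≠ 0).card
        ≤ ({i, j} : Finset (Fin M)).card := Finset.card_le_card hsub
      _ ≤ 2 := (Finset.card_insert_le _ _).trans (by simp)
  -- sum of squares of x is 2
  have hsum2 : ∑ m, x m ^ 2 = 2 := by
    have hterm : ∀ m, x m ^ 2 = (if m = i then (1:ℝ) else 0) + (if m = j then 1 else 0) := by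
      intro m
      rcases eq_or_ne m i with rfl | hmi
      · simp [hx, Pi.single_apply, hij]
      · rcases eq_or_ne m j with rfl | hmj
        · simp [hx, Pi.single_apply, hij.symm, hmi]
        · simp [hx, Pi.single_apply, hmi, hmj]
    rw [Finset.sum_congr rfl fun m _ => hterm m, Finset.sum_add_distrib]
    simp
    norm_num
  have hrip := ric_bounds A x 2 hcard (by rw [hsum2]; norm_num)
  rw [hsum2] at hrip
  have hyy : y ⬝ᵥ y = ∑ k, A.mulVec x k ^ 2 := by
    simp [hy, dotProduct, sq]
  have hquad := quad_inv_bounds (A * Aᵀ) hH heig lam1 lamN hlam1 hlamN y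
  constructor
  · rw [key]
    refine le_trans ?_ hquad.1
    rw [div_le_div_iff₀ hlamNpos hlamNpos, hyy]
    nlinarith [hrip.1, hlamNpos]
  · rw [key]
    refine le_trans hquad.2 ?_
    rw [div_le_div_iff₀ hlam1pos hlam1pos, hyy]
    nlinarith [hrip.2, hlam1pos]
end

section
/- Let M = 2^r be a power of two, let N be a divisor of M−1, set κ = (M−1)/N, and let A ∈ ℝ^{N×M} be the column-normalized group Hadamard matrix built from the unique subgroup {a_1,…,a_N} of order N of 𝔽_{2^r}^×. Then the coherence of A satisfies μ(A) ≤ (1/κ)·((κ−1)·√((1/N)·(κ + 1/N)) + 1/N). -/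
open Matrix Finset

namespace Stmt11Aux

noncomputable def chi (r : ℕ) (t : GaloisField 2 r) : ℝ :=
  if Algebra.trace (ZMod 2) (GaloisField 2 r) t = 0 then 1 else -1

variable {r : ℕ}

lemma chi_zero : chi r 0 = 1 := by simp [chi]

lemma chi_add (u v : GaloisField 2 r) : chi r (u + v) = chi r u * chi r v := by
  have key : ∀ b c : ZMod 2,
      ((if b + c = 0 then (1:ℝ) else -1)
        = (if b = 0 then (1:ℝ) else -1) * (if c = 0 then (1:ℝ) else -1)) := by
    intro b c
    rcases (by decide : ∀ b : ZMod 2, b = 0 ∨ b = 1) b with rfl | rfl <;>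
      rcases (by decide : ∀ b : ZMod 2, b = 0 ∨ b = 1) c with rfl | rfl <;>
      simp only [add_zero, zero_add, show ((1:ZMod 2)+1 = 0) from rfl] <;> norm_num
  simp only [chi, map_add]
  exact key _ _

lemma sum_chi [Fintype (GaloisField 2 r)] : ∑ t : GaloisField 2 r, chi r t = 0 := by
  obtain ⟨t0, ht0⟩ := Algebra.trace_surjective (ZMod 2) (GaloisField 2 r) 1
  have h0 : chi r t0 = -1 := by simp [chi, ht0]
  have h1 : ∑ t : GaloisField 2 r, chi r (t + t0) = ∑ t : GaloisField 2 r, chi r t :=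
    Fintype.sum_bijective (· + t0) (Equiv.addRight t0).bijective _ _ (fun t => rfl)
  have h2 : ∑ t : GaloisField 2 r, chi r (t + t0) = -∑ t : GaloisField 2 r, chi r t := by
    simp [chi_add, h0, Finset.sum_neg_distrib]
  linarith

lemma sum_chi_mul [Fintype (GaloisField 2 r)] {c : GaloisField 2 r} (hc : c ≠ 0) :
    ∑ t : GaloisField 2 r, chi r (c * t) = 0 := by
  rw [Fintype.sum_bijective (c * ·) (mulLeft_bijective₀ c hc) _ (chi r) (fun t => rfl)]
  exact sum_chi

lemma alg_bound {Mr Nr κ s : ℝ} (hN : 0 < Nr) (hM : Nr + 1 ≤ Mr)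
    (hκN : κ * Nr = Mr - 1) (hκ1 : 1 ≤ κ)
    (hCS : (Nr + Nr * s)^2 ≤ (Nr*Mr - Nr^2 - Nr*s^2) * (Mr - Nr - 1)) :
    κ * |s| ≤ (κ - 1) * Real.sqrt Mr + 1 := by
  have hMnn : (0:ℝ) ≤ Mr := by linarith
  have hsq : Real.sqrt Mr ^ 2 = Mr := Real.sq_sqrt hMnn
  have hsnn := Real.sqrt_nonneg Mr
  have h1 : (1+s)^2 ≤ (κ-1) * (Mr - Nr - s^2) := by
    have e2 : Mr - Nr - 1 = Nr * (κ - 1) := by linear_combination -hκN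
    have h2 : Nr^2 * ((1+s)^2) ≤ Nr^2 * ((κ-1)*(Mr - Nr - s^2)) := by
      rw [e2] at hCS; linear_combination hCS
    exact le_of_mul_le_mul_left h2 (by positivity)
  have h3 : κ*|s|^2 - 2*|s| + 1 ≤ (κ-1)*(Mr - Nr) := by
    nlinarith [h1, neg_abs_le s, sq_abs s]
  have h4 : κ*(κ*|s|^2 - 2*|s| + 1) ≤ κ*((κ-1)*(Mr-Nr)) :=
    mul_le_mul_of_nonneg_left h3 (by linarith)
  have h5 : (κ-1)*(κ*Nr) = (κ-1)*(Mr-1) := by rw [hκN]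
  have key : (κ*|s| - 1)^2 ≤ ((κ-1)*Real.sqrt Mr)^2 := by
    have hexp : ((κ-1)*Real.sqrt Mr)^2 = (κ-1)^2 * Mr := by
      rw [mul_pow, hsq]
    rw [hexp]; nlinarith [h4, h5]
  have h6 := Real.sqrt_le_sqrt key
  rw [Real.sqrt_sq_eq_abs, Real.sqrt_sq_eq_abs] at h6
  have h7 : |(κ-1)*Real.sqrt Mr| = (κ-1)*Real.sqrt Mr :=
    abs_of_nonneg (mul_nonneg (by linarith) hsnn)
  rw [h7] at h6
  have := le_abs_self (κ*|s| - 1)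
  linarith

noncomputable def Sfun (r : ℕ) (Hs : Finset (GaloisField 2 r)) (y : GaloisField 2 r) : ℝ :=
  ∑ h ∈ Hs, chi r (h * y)

end Stmt11Aux


/-- The column-normalized group Hadamard matrix: given elements
`a : Fin N → 𝔽_{2^r}` (the subgroup elements) and an enumeration
`x : Fin M → 𝔽_{2^r}`, the matrix `A ∈ ℝ^{N×M}` with
`A i j = (−1)^{Tr(a_i x_j)} / √N`, where `Tr : 𝔽_{2^r} → 𝔽_2` is the field trace. -/
noncomputable def groupHadamard (r N M : ℕ) (a : Fin N → GaloisField 2 r)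
    (x : Fin M → GaloisField 2 r) : Matrix (Fin N) (Fin M) ℝ :=
  Matrix.of fun i j =>
    (if Algebra.trace (ZMod 2) (GaloisField 2 r) (a i * x j) = 0 then (1 : ℝ) else -1) /
      Real.sqrt N

/-- The coherence `μ(A)` of a matrix with (unit-norm) columns `a_1,…,a_M`:
`μ(A) = max_{i ≠ j} |a_iᵀ a_j|`. -/
noncomputable def coherence {N M : ℕ} (A : Matrix (Fin N) (Fin M) ℝ) : ℝ :=
  sSup {y : ℝ | ∃ i j : Fin M, i ≠ j ∧ y = |∑ k, A k i * A k j|}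

open Stmt11Aux in
set_option maxHeartbeats 1200000 in
/-- for `M = 2^r` a power of two, `N` a divisor of `M − 1`, and
`κ = (M−1)/N`, the coherence of the column-normalized group Hadamard matrix
`A ∈ ℝ^{N×M}` built from the unique subgroup `{a_1,…,a_N}` of order `N` of `𝔽_{2^r}ˣ`
satisfies `μ(A) ≤ (1/κ)·((κ−1)·√((1/N)(κ+1/N)) + 1/N)`. -/
theorem stmt_11 {r N M : ℕ} (hM : M = 2 ^ r) (hNdvd : N ∣ M - 1) (hN : 0 < N)
    (a : Fin N → GaloisField 2 r) (ha_inj : Function.Injective a)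
    (H : Subgroup (GaloisField 2 r)ˣ) (hHcard : Nat.card H = N)
    (ha_range : Set.range a =
      (fun u : (GaloisField 2 r)ˣ => (u : GaloisField 2 r)) '' (H : Set (GaloisField 2 r)ˣ))
    (x : Fin M → GaloisField 2 r) (hx : Function.Bijective x)
    (A : Matrix (Fin N) (Fin M) ℝ) (hA : A = groupHadamard r N M a x)
    (κ : ℝ) (hκ : κ = ((M : ℝ) - 1) / N) :
    coherence A ≤
      (1 / κ) * ((κ - 1) * Real.sqrt ((1 / N) * (κ + 1 / N)) + 1 / N) := by
  classical
  haveI : Fintype (GaloisField 2 r) := Fintype.ofFinite _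
  -- cardinalities
  have hcardF : Fintype.card (GaloisField 2 r) = M := by
    rw [← Fintype.card_fin M]
    exact (Fintype.card_of_bijective hx).symm
  have hM2 : 2 ≤ M := by
    rcases Nat.lt_or_ge M 2 with h | h
    · exfalso
      interval_cases M
      · exact absurd hcardF (by simp [Fintype.card_pos.ne'])
      · exact absurd hcardF (by have := Fintype.one_lt_card (α := GaloisField 2 r); omega)
    · exact h
  have hNle : N ≤ M - 1 := Nat.le_of_dvd (by omega) hNdvd
  have hNM : N + 1 ≤ M := by omega
  -- real facts
  have hNR : (0:ℝ) < N := by exact_mod_cast hN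
  have hMR : (N:ℝ) + 1 ≤ M := by exact_mod_cast hNM
  have hκN : κ * N = (M:ℝ) - 1 := by rw [hκ]; field_simp
  have hκ1 : 1 ≤ κ := by
    rw [hκ, le_div_iff₀ hNR, one_mul]
    linarith
  have hκpos : (0:ℝ) < κ := by linarith
  -- simplify RHS sqrt
  have hsqrt : Real.sqrt ((1/(N:ℝ)) * (κ + 1/N)) = Real.sqrt M / N := by
    have e : (1/(N:ℝ)) * (κ + 1/N) = (M:ℝ) * (1/N)^2 := by
      field_simp
      linear_combination hκN
    rw [e, Real.sqrt_mul (by positivity), Real.sqrt_sq (by positivity)]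
    rw [one_div, div_eq_mul_inv]
  -- the subgroup as a finset of F
  set Hs : Finset (GaloisField 2 r) := Finset.image a Finset.univ with hHsdef
  have hHscard : Hs.card = N := by
    rw [hHsdef, Finset.card_image_of_injective _ ha_inj, Finset.card_univ, Fintype.card_fin]
  have hmemHs : ∀ b : GaloisField 2 r, b ∈ Hs ↔ ∃ u : (GaloisField 2 r)ˣ, u ∈ H ∧ (u : GaloisField 2 r) = b := by
    intro b
    rw [hHsdef]
    simp only [Finset.mem_image, Finset.mem_univ, true_and]
    constructor
    · rintro ⟨k, rfl⟩
      have h1 : a k ∈ Set.range a := ⟨k, rfl⟩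
      rw [ha_range] at h1
      obtain ⟨u, hu, h⟩ := h1
      exact ⟨u, hu, h⟩
    · rintro ⟨u, hu, rfl⟩
      have h1 : (u : GaloisField 2 r) ∈ Set.range a := by rw [ha_range]; exact ⟨u, hu, rfl⟩
      obtain ⟨k, hk⟩ := h1
      exact ⟨k, hk⟩
  have hHs0 : ∀ b ∈ Hs, b ≠ 0 := by
    intro b hb
    obtain ⟨u, _, rfl⟩ := (hmemHs b).1 hb
    exact u.ne_zero
  have hHsmul : ∀ b ∈ Hs, Finset.image (fun h => h * b) Hs = Hs := by
    intro b hb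
    obtain ⟨u, hu, hub⟩ := (hmemHs b).1 hb
    apply Finset.eq_of_subset_of_card_le
    · intro z hz
      obtain ⟨h, hh, rfl⟩ := Finset.mem_image.1 hz
      obtain ⟨v, hv, hvb⟩ := (hmemHs h).1 hh
      refine (hmemHs _).2 ⟨v * u, mul_mem hv hu, ?_⟩
      rw [Units.val_mul, hvb, hub]
    · rw [Finset.card_image_of_injective _ (mul_left_injective₀ (hHs0 b hb))]
  -- the character sum function
  set S : GaloisField 2 r → ℝ := Sfun r Hs with hSdef
  have hSy : ∀ y : GaloisField 2 r, S y = ∑ h ∈ Hs, chi r (h * y) := fun y => rfl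
  have hS_asFin : ∀ y : GaloisField 2 r, (∑ k : Fin N, chi r (a k * y)) = S y := by
    intro y
    rw [hSy, hHsdef]
    exact (Finset.sum_image (f := fun h => chi r (h * y)) (fun p _ q _ h => ha_inj h)).symm
  have hS_mul : ∀ b ∈ Hs, ∀ y : GaloisField 2 r, S (b * y) = S y := by
    intro b hb y
    calc S (b * y) = ∑ h ∈ Hs, chi r ((h * b) * y) := by
          rw [hSy]
          refine Finset.sum_congr rfl fun h _ => ?_
          rw [mul_assoc, mul_comm b y, ← mul_assoc, mul_assoc h y b, mul_comm y b, ← mul_assoc]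
      _ = ∑ z ∈ Finset.image (fun h => h * b) Hs, chi r (z * y) :=
          (Finset.sum_image (f := fun z => chi r (z * y)) (fun p _ q _ h => mul_left_injective₀ (hHs0 b hb) h)).symm
      _ = S y := by rw [hHsmul b hb, hSy]
  have hS0 : S 0 = N := by
    rw [hSy]
    simp only [mul_zero, chi_zero, Finset.sum_const, hHscard, nsmul_eq_mul, mul_one]
  -- key total sums
  have hinner : ∀ c : GaloisField 2 r, ∑ t : GaloisField 2 r, chi r (c * t) = if c = 0 then (M:ℝ) else 0 := by
    intro c
    split_ifs with hc
    · subst hc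
      simp only [zero_mul, chi_zero, Finset.sum_const, Finset.card_univ, hcardF,
        nsmul_eq_mul, mul_one]
    · exact sum_chi_mul hc
  have hsumS : ∑ t : GaloisField 2 r, S t = 0 := by
    simp only [hSy]
    rw [Finset.sum_comm]
    refine Finset.sum_eq_zero fun h hh => ?_
    exact sum_chi_mul (hHs0 h hh)
  have hsumS2 : ∑ t : GaloisField 2 r, (S t)^2 = (N:ℝ) * M := by
    have step1 : ∀ t : GaloisField 2 r, (S t)^2 = ∑ h ∈ Hs, ∑ h' ∈ Hs, chi r ((h + h') * t) := by
      intro t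
      rw [hSy, sq, Finset.sum_mul_sum]
      refine Finset.sum_congr rfl fun h _ => Finset.sum_congr rfl fun h' _ => ?_
      rw [← chi_add, add_mul]
    calc ∑ t : GaloisField 2 r, (S t)^2 = ∑ t : GaloisField 2 r, ∑ h ∈ Hs, ∑ h' ∈ Hs, chi r ((h + h') * t) :=
          Finset.sum_congr rfl fun t _ => step1 t
      _ = ∑ h ∈ Hs, ∑ h' ∈ Hs, ∑ t : GaloisField 2 r, chi r ((h + h') * t) := by
          rw [Finset.sum_comm]
          refine Finset.sum_congr rfl fun h _ => ?_
          rw [Finset.sum_comm]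
      _ = ∑ h ∈ Hs, ∑ h' ∈ Hs, (if h' = h then (M:ℝ) else 0) := by
          refine Finset.sum_congr rfl fun h _ => Finset.sum_congr rfl fun h' _ => ?_
          rw [hinner]
          congr 1
          rw [eq_iff_iff]
          constructor
          · intro e
            have := eq_neg_of_add_eq_zero_right e
            rwa [CharTwo.neg_eq] at this
          · intro e
            rw [e, CharTwo.add_self_eq_zero]
      _ = ∑ h ∈ Hs, (M:ℝ) := by
          refine Finset.sum_congr rfl fun h hh => ?_
          rw [Finset.sum_ite_eq' Hs h (fun _ => (M:ℝ)), if_pos hh]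
      _ = (N:ℝ) * M := by
          rw [Finset.sum_const, hHscard, nsmul_eq_mul]
  -- now bound each inner product
  have hRHSnn : 0 ≤ (1 / κ) * ((κ - 1) * Real.sqrt ((1/(N:ℝ)) * (κ + 1/N)) + 1 / N) := by
    have := Real.sqrt_nonneg ((1/(N:ℝ)) * (κ + 1/N))
    have h1 : (0:ℝ) ≤ κ - 1 := by linarith
    positivity
  rw [coherence]
  apply Real.sSup_le _ hRHSnn
  rintro y ⟨i, j, hij, rfl⟩
  -- the inner product equals S (x i + x j) / N
  set z : GaloisField 2 r := x i + x j with hzdef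
  have hz0 : z ≠ 0 := by
    intro h0
    apply hij
    apply hx.1
    have := eq_neg_of_add_eq_zero_left h0
    rwa [CharTwo.neg_eq] at this
  have hip : ∑ k, A k i * A k j = S z / N := by
    have hAk : ∀ (k : Fin N) (i' : Fin M), A k i' = chi r (a k * x i') / Real.sqrt N := by
      intro k i'; rw [hA]; rfl
    have : ∀ k : Fin N, A k i * A k j = chi r (a k * z) / N := by
      intro k
      rw [hAk, hAk, div_mul_div_comm, Real.mul_self_sqrt (by positivity), ← chi_add, ← mul_add]
    rw [Finset.sum_congr rfl fun k _ => this k, ← Finset.sum_div, hS_asFin]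
  rw [hip]
  -- coset and complement
  set C : Finset (GaloisField 2 r) := Finset.image (fun h => h * z) Hs with hCdef
  have hCcard : C.card = N := by
    rw [hCdef, Finset.card_image_of_injective _ (mul_left_injective₀ hz0), hHscard]
  have hC0 : (0 : GaloisField 2 r) ∉ C := by
    intro h0
    obtain ⟨h, hh, he⟩ := Finset.mem_image.1 h0
    exact hz0 (by rcases mul_eq_zero.1 he with h' | h'; exact absurd h' (hHs0 h hh); exact h')
  have hsumC : ∑ u ∈ C, S u = (N:ℝ) * S z := by
    rw [hCdef, Finset.sum_image (fun p _ q _ h => mul_left_injective₀ hz0 h)]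
    rw [Finset.sum_congr rfl fun h hh => hS_mul h hh z]
    rw [Finset.sum_const, hHscard, nsmul_eq_mul]
  have hsumC2 : ∑ u ∈ C, (S u)^2 = (N:ℝ) * (S z)^2 := by
    rw [hCdef, Finset.sum_image (fun p _ q _ h => mul_left_injective₀ hz0 h)]
    rw [Finset.sum_congr rfl fun h hh => by rw [hS_mul h hh z]]
    rw [Finset.sum_const, hHscard, nsmul_eq_mul]
  set D : Finset (GaloisField 2 r) := Finset.univ \ insert 0 C with hDdef
  have hCins : (insert 0 C).card = N + 1 := by
    rw [Finset.card_insert_of_notMem hC0, hCcard]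
  have hDcard : (D.card : ℝ) = (M:ℝ) - N - 1 := by
    rw [hDdef, Finset.card_sdiff_of_subset (Finset.subset_univ _), Finset.card_univ, hcardF, hCins]
    have : N + 1 ≤ M := hNM
    push_cast [Nat.cast_sub this]
    ring
  have hsumD : ∑ u ∈ D, S u = -(N:ℝ) - N * S z := by
    rw [hDdef, Finset.sum_sdiff_eq_sub (Finset.subset_univ _), hsumS,
      Finset.sum_insert hC0, hsumC, hS0]
    ring
  have hsumD2 : ∑ u ∈ D, (S u)^2 = (N:ℝ)*M - N^2 - N * (S z)^2 := by
    rw [hDdef, Finset.sum_sdiff_eq_sub (Finset.subset_univ _), hsumS2,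
      Finset.sum_insert hC0, hsumC2, hS0]
    ring
  -- Cauchy-Schwarz
  have hCS0 := Finset.sum_mul_sq_le_sq_mul_sq D S (fun _ => 1)
  simp only [mul_one, one_pow, Finset.sum_const, nsmul_eq_mul, mul_one] at hCS0
  rw [hsumD, hsumD2, hDcard] at hCS0
  have hCS : ((N:ℝ) + N * S z)^2 ≤ ((N:ℝ)*M - N^2 - N*(S z)^2) * ((M:ℝ) - N - 1) := by
    calc ((N:ℝ) + N * S z)^2 = (-(N:ℝ) - N * S z)^2 := by ring
      _ ≤ _ := hCS0
  -- apply the algebraic bound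
  have hbound := alg_bound hNR hMR hκN hκ1 hCS
  -- finish
  rw [hsqrt, abs_div, abs_of_nonneg (le_of_lt hNR), div_le_iff₀ hNR]
  have hrhs : (1/κ * ((κ-1)*(Real.sqrt M/(N:ℝ)) + 1/N)) * N = ((κ-1)*Real.sqrt M + 1)/κ := by
    field_simp
  rw [hrhs, le_div_iff₀ hκpos]
  linarith [hbound]
end

section
/- Let M = 2^r be a power of two, let N be a divisor of M−1, and let A ∈ ℝ^{N×M} be the column-normalized group Hadamard matrix built from the unique subgroup {a_1,…,a_N} of order N of 𝔽_{2^r}^×. Then A has unit ℓ₂-norm columns and orthogonal rows, and A Aᵀ = (M/N)·I_N, where I_N is the N×N identity matrix. -/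
open Matrix

/-- Sum of the real sign of a surjective-ish `ZMod 2`-valued additive map vanishes. -/
lemma sum_sign_eq_zero {F : Type*} [AddCommGroup F] [Fintype F] (f : F →+ ZMod 2)
    (b : F) (hb : f b ≠ 0) (hbb : b + b = 0) :
    ∑ y : F, (if f y = 0 then (1 : ℝ) else -1) = 0 := by
  have key : ∀ s t : ZMod 2, t ≠ 0 → (s + t = 0 ↔ ¬ s = 0) := by decide
  have hswap : ∀ y : F, f (y + b) = 0 ↔ ¬ f y = 0 := by
    intro y
    rw [map_add]
    exact key _ _ hb
  have hcard : (Finset.univ.filter fun y : F => f y = 0).card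
      = (Finset.univ.filter fun y : F => ¬ f y = 0).card := by
    apply Finset.card_bij' (fun y _ => y + b) (fun y _ => y + b)
    · intro y hy
      simp only [Finset.mem_filter, Finset.mem_univ, true_and] at hy ⊢
      exact fun h => ((hswap y).mp h) hy
    · intro y hy
      simp only [Finset.mem_filter, Finset.mem_univ, true_and] at hy ⊢
      exact (hswap y).mpr hy
    · intro y _; rw [add_assoc, hbb, add_zero]
    · intro y _; rw [add_assoc, hbb, add_zero]
  rw [Finset.sum_ite, Finset.sum_const, Finset.sum_const, hcard]
  simp

/-- for `M = 2^r`, `N ∣ M − 1`, the column-normalized group Hadamard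
matrix `A ∈ ℝ^{N×M}` built from the unique subgroup `{a_1,…,a_N}` of order `N` of
`𝔽_{2^r}ˣ` has unit `ℓ₂`-norm columns, orthogonal rows, and satisfies
`A Aᵀ = (M/N)·I_N`. -/
theorem stmt_12 {r N M : ℕ} (hM : M = 2 ^ r) (hNdvd : N ∣ M - 1) (hN : 0 < N)
    (a : Fin N → GaloisField 2 r) (ha_inj : Function.Injective a)
    (H : Subgroup (GaloisField 2 r)ˣ) (hHcard : Nat.card H = N)
    (ha_range : Set.range a =
      (fun u : (GaloisField 2 r)ˣ => (u : GaloisField 2 r)) '' (H : Set (GaloisField 2 r)ˣ))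
    (x : Fin M → GaloisField 2 r) (hx : Function.Bijective x)
    (A : Matrix (Fin N) (Fin M) ℝ) (hA : A = groupHadamard r N M a x) :
    (∀ j, ∑ i, A i j ^ 2 = 1) ∧
    (∀ i i' : Fin N, i ≠ i' → ∑ j, A i j * A i' j = 0) ∧
    A * Aᵀ = ((M : ℝ) / N) • (1 : Matrix (Fin N) (Fin N) ℝ) := by
  classical
  subst hA
  letI : Fintype (GaloisField 2 r) := Fintype.ofFinite _
  have hNR : (0 : ℝ) < (N : ℝ) := by exact_mod_cast hN
  have hcases : ∀ s : ZMod 2, s = 0 ∨ s = 1 := by decide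
  -- each entry squared is 1/N
  have hentry : ∀ i j, groupHadamard r N M a x i j * groupHadamard r N M a x i j
      = 1 / (N : ℝ) := by
    intro i j
    simp only [groupHadamard, Matrix.of_apply]
    rw [div_mul_div_comm, Real.mul_self_sqrt hNR.le]
    rcases hcases (Algebra.trace (ZMod 2) (GaloisField 2 r) (a i * x j)) with h | h <;>
      simp [h]
  -- unit norm columns
  have hcol : ∀ j, ∑ i, groupHadamard r N M a x i j ^ 2 = 1 := by
    intro j
    have h1 : ∀ i : Fin N, groupHadamard r N M a x i j ^ 2 = 1 / (N : ℝ) := by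
      intro i; rw [sq]; exact hentry i j
    rw [Finset.sum_congr rfl fun i _ => h1 i]
    rw [Finset.sum_const, Finset.card_univ, Fintype.card_fin]
    rw [nsmul_eq_mul, mul_one_div_cancel hNR.ne']
  -- row orthogonality
  have hrow : ∀ i i' : Fin N, i ≠ i' →
      ∑ j, groupHadamard r N M a x i j * groupHadamard r N M a x i' j = 0 := by
    intro i i' hii
    have hcne : a i + a i' ≠ 0 := by
      intro h
      apply hii
      apply ha_inj
      have h2 : a i = -a i' := by linear_combination h
      rw [h2, CharTwo.neg_eq]
    -- the additive character map
    set f : GaloisField 2 r →+ ZMod 2 :=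
      AddMonoidHom.mk' (fun y => Algebra.trace (ZMod 2) (GaloisField 2 r) ((a i + a i') * y))
        (fun u v => by simp [mul_add]) with hf2
    -- nondegeneracy gives b with f b ≠ 0
    have htr := traceForm_nondegenerate (ZMod 2) (GaloisField 2 r)
    have hb : ∃ b, f b ≠ 0 := by
      by_contra hfn
      push_neg at hfn
      apply hcne
      apply htr.1 _
      intro n
      rw [Algebra.traceForm_apply]
      exact hfn n
    obtain ⟨b, hb⟩ := hb
    have hmul : ∀ s t : ZMod 2,
        (if s = 0 then (1 : ℝ) else -1) * (if t = 0 then 1 else -1)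
        = if s + t = 0 then 1 else -1 := by
      intro s t
      rcases hcases s with h | h <;> rcases hcases t with h' | h' <;>
        simp [h, h', (by decide : (1 : ZMod 2) + 1 = 0)]
    have hterm : ∀ j, groupHadamard r N M a x i j * groupHadamard r N M a x i' j
        = (if f (x j) = 0 then (1 : ℝ) else -1) / (N : ℝ) := by
      intro j
      simp only [groupHadamard, Matrix.of_apply]
      rw [div_mul_div_comm, Real.mul_self_sqrt hNR.le, hmul, ← map_add, ← add_mul]
      rfl
    rw [Finset.sum_congr rfl fun j _ => hterm j, ← Finset.sum_div]
    rw [Fintype.sum_bijective x hx _ (fun y => if f y = 0 then (1 : ℝ) else -1)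
      (fun j => rfl)]
    rw [sum_sign_eq_zero f b hb (CharTwo.add_self_eq_zero b), zero_div]
  refine ⟨hcol, hrow, ?_⟩
  ext i i'
  rw [Matrix.mul_apply]
  simp only [Matrix.transpose_apply, Matrix.smul_apply, Matrix.one_apply, smul_eq_mul]
  by_cases h : i = i'
  · subst h
    rw [if_pos rfl, mul_one]
    rw [Finset.sum_congr rfl fun j _ => hentry i j]
    rw [Finset.sum_const, Finset.card_univ, Fintype.card_fin]
    simp [div_eq_mul_inv]
  · rw [if_neg h, mul_zero]
    exact hrow i i' h
end

section
/- Let p_1,…,p_M be probability density functions on ℝ^N and suppose the observation Ũ is drawn from p_1. Let E = {ũ ∈ ℝ^N : p_j(ũ) ≥ p_1(ũ) for some j ≠ 1} (the event containing every possible error of the maximum-likelihood decoder argmax_j p_j(ũ)). Then for every 0 ≤ ρ ≤ 1, ℙ(Ũ ∈ E) ≤ ∫_{ℝ^N} p_1(ũ)^{1/(1+ρ)} (Σ_{j≠1} p_j(ũ)^{1/(1+ρ)})^ρ dũ. -/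
open MeasureTheory

/-- Gallager's bound: let `p_1,…,p_M` be probability densities on
`ℝ^N` (w.r.t. Lebesgue measure) and suppose the observation is drawn from `p_1`
(index `0` below plays the role of hypothesis 1). Let
`E = {ũ : p_j(ũ) ≥ p_1(ũ) for some j ≠ 1}`. Then for every `0 ≤ ρ ≤ 1`,
`ℙ(Ũ ∈ E) ≤ ∫ p_1^{1/(1+ρ)} (Σ_{j≠1} p_j^{1/(1+ρ)})^ρ`. -/
theorem stmt_13 {N M : ℕ} [NeZero M] (p : Fin M → (Fin N → ℝ) → ℝ)
    (hmeas : ∀ j, Measurable (p j)) (hnonneg : ∀ j u, 0 ≤ p j u)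
    (hdens : ∀ j, ∫ u, p j u = 1)
    (ρ : ℝ) (hρ0 : 0 ≤ ρ) (hρ1 : ρ ≤ 1) :
    (∫⁻ u in {u : Fin N → ℝ | ∃ j, j ≠ 0 ∧ p j u ≥ p 0 u}, ENNReal.ofReal (p 0 u)) ≤
      ∫⁻ u : Fin N → ℝ,
        ENNReal.ofReal
          (p 0 u ^ (1 / (1 + ρ)) *
            (∑ j ∈ Finset.univ.erase (0 : Fin M), p j u ^ (1 / (1 + ρ))) ^ ρ) := by
  have h1ρ : (0:ℝ) < 1 + ρ := by linarith
  set s : ℝ := 1 / (1 + ρ) with hs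
  have hs0 : 0 ≤ s := by positivity
  calc (∫⁻ u in {u : Fin N → ℝ | ∃ j, j ≠ 0 ∧ p j u ≥ p 0 u}, ENNReal.ofReal (p 0 u))
      ≤ ∫⁻ u in {u : Fin N → ℝ | ∃ j, j ≠ 0 ∧ p j u ≥ p 0 u},
          ENNReal.ofReal (p 0 u ^ s *
            (∑ j ∈ Finset.univ.erase (0 : Fin M), p j u ^ s) ^ ρ) := by
        apply setLIntegral_mono
        · apply Measurable.ennreal_ofReal
          exact (((hmeas 0).pow measurable_const).mul
            ((Finset.measurable_sum _ (fun j _ => (hmeas j).pow measurable_const)).pow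
              measurable_const))
        · rintro u ⟨j, hj, hju⟩
          apply ENNReal.ofReal_le_ofReal
          have hp0 : 0 ≤ p 0 u := hnonneg 0 u
          have hkey : s + s * ρ = 1 := by rw [hs]; field_simp
          have hsum : p 0 u ^ s ≤ ∑ j ∈ Finset.univ.erase (0 : Fin M), p j u ^ s := by
            calc p 0 u ^ s ≤ p j u ^ s := Real.rpow_le_rpow hp0 hju hs0
              _ ≤ _ := Finset.single_le_sum
                (fun i _ => Real.rpow_nonneg (hnonneg i u) s)
                (Finset.mem_erase.2 ⟨hj, Finset.mem_univ j⟩)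
          have h2 : (p 0 u ^ s) ^ ρ ≤
              (∑ j ∈ Finset.univ.erase (0 : Fin M), p j u ^ s) ^ ρ :=
            Real.rpow_le_rpow (Real.rpow_nonneg hp0 s) hsum hρ0
          calc p 0 u = p 0 u ^ (s + s * ρ) := by rw [hkey, Real.rpow_one]
            _ = p 0 u ^ s * (p 0 u ^ s) ^ ρ := by
                rw [Real.rpow_add' hp0 (by rw [hkey]; norm_num), Real.rpow_mul hp0]
            _ ≤ _ := by
                apply mul_le_mul_of_nonneg_left h2 (Real.rpow_nonneg hp0 s)
    _ ≤ _ := setLIntegral_le_lintegral _ _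
end

section
/- Under the Gaussian signal model with M ≥ 2 hypotheses, T observation times, and hypothesis 1 true, the maximum-likelihood detector based on the observation vector (y(1),…,y(T)) and knowledge of the signals has error probability satisfying P*(err) ≤ (M−1)·(1 + SNR/2)^{−T/2}. -/
open MeasureTheory Real ProbabilityTheory
open scoped NNReal ENNReal


lemma integral_exp_quadratic_real {b : ℝ} (hb : b < 0) (c : ℝ) :
    ∫ x : ℝ, Real.exp (b * x ^ 2 + c * x) = Real.sqrt (π / -b) * Real.exp (-c ^ 2 / (4 * b)) := by
  have h := integral_cexp_quadratic (b := (b : ℂ)) (by simpa using hb) (c : ℂ) 0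
  have h1 : ∀ x : ℝ, Complex.exp ((b:ℂ) * (x:ℂ) ^ 2 + (c:ℂ) * (x:ℂ) + 0)
      = ((Real.exp (b * x ^ 2 + c * x) : ℝ) : ℂ) := by
    intro x
    rw [Complex.ofReal_exp]
    push_cast
    ring_nf
  simp only [h1] at h
  have h2 : ((π : ℂ) / -(b:ℂ)) ^ (1/2 : ℂ) = ((Real.sqrt (π / -b) : ℝ) : ℂ) := by
    rw [Real.sqrt_eq_rpow]
    rw [show ((π:ℂ) / -(b:ℂ)) = ((π / -b : ℝ) : ℂ) by push_cast; ring]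
    rw [show (1/2 : ℂ) = ((1/2 : ℝ) : ℂ) by norm_num]
    rw [← Complex.ofReal_cpow (div_nonneg Real.pi_pos.le (by linarith))]
  have h3 : Complex.exp (0 - (c:ℂ)^2 / (4 * (b:ℂ))) = ((Real.exp (-c ^ 2 / (4 * b)) : ℝ) : ℂ) := by
    rw [Complex.ofReal_exp]; push_cast; ring_nf
  rw [h2, h3, ← Complex.ofReal_mul, show (∫ x : ℝ, ((Real.exp (b * x ^ 2 + c * x) : ℝ) : ℂ))
      = ((∫ x : ℝ, Real.exp (b * x ^ 2 + c * x) : ℝ) : ℂ) from _root_.integral_ofReal] at h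
  exact_mod_cast h

lemma integrable_exp_quadratic_real {b : ℝ} (hb : b < 0) (c : ℝ) :
    Integrable (fun x : ℝ => Real.exp (b * x ^ 2 + c * x)) := by
  have h := (integrable_cexp_quadratic' (b := (b : ℂ)) (by simpa using hb) (c : ℂ) 0).re
  refine h.congr (Filter.Eventually.of_forall fun x => ?_)
  have h1 : Complex.exp ((b:ℂ) * (x:ℂ) ^ 2 + (c:ℂ) * (x:ℂ) + 0)
      = ((Real.exp (b * x ^ 2 + c * x) : ℝ) : ℂ) := by
    rw [Complex.ofReal_exp]; push_cast; ring_nf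
  simp only
  rw [h1]
  exact Complex.ofReal_re _

lemma pdf_mul_exp_eq {v : ℝ≥0} (hv : 0 < (v:ℝ)) (a c : ℝ) (x : ℝ) :
    gaussianPDFReal 0 v x * Real.exp (a * x ^ 2 + c * x)
      = (Real.sqrt (2 * π * v))⁻¹ * Real.exp ((a - (2*(v:ℝ))⁻¹) * x ^ 2 + c * x) := by
  have hvne : (v:ℝ) ≠ 0 := hv.ne'
  rw [gaussianPDFReal, mul_assoc, ← Real.exp_add]
  congr 2
  field_simp
  ring

lemma integrable_exp_quadratic_gaussian {v : ℝ≥0} (hv : 0 < (v:ℝ)) {a : ℝ} (c : ℝ)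
    (ha : 2 * a * v < 1) :
    Integrable (fun x => Real.exp (a * x ^ 2 + c * x)) (gaussianReal 0 v) := by
  have hvne : (v:ℝ) ≠ 0 := hv.ne'
  have hv0 : v ≠ 0 := by exact_mod_cast hvne
  have h2v : 0 < 2*(v:ℝ) := by linarith
  have hb : a - (2*(v:ℝ))⁻¹ < 0 := by
    have h3 := mul_inv_cancel₀ h2v.ne'
    have h4 : 0 < (2*(v:ℝ))⁻¹ := inv_pos.mpr h2v
    nlinarith
  rw [gaussianReal_of_var_ne_zero _ hv0]
  have hpdf : gaussianPDF 0 v = fun x => ((Real.toNNReal (gaussianPDFReal 0 v x) : ℝ≥0) : ℝ≥0∞) :=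
    rfl
  rw [hpdf, integrable_withDensity_iff_integrable_smul]
  · refine ((integrable_exp_quadratic_real hb c).const_mul ((Real.sqrt (2 * π * v))⁻¹)).congr
      (Filter.Eventually.of_forall fun x => ?_)
    simp only
    rw [NNReal.smul_def, smul_eq_mul, Real.coe_toNNReal _ (gaussianPDFReal_nonneg 0 v x)]
    exact (pdf_mul_exp_eq hv a c x).symm
  · exact (measurable_gaussianPDFReal 0 v).real_toNNReal

lemma integral_exp_quadratic_gaussian {v : ℝ≥0} (hv : 0 < (v:ℝ)) {a : ℝ} (c : ℝ)
    (ha : 2 * a * v < 1) :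
    ∫ x, Real.exp (a * x ^ 2 + c * x) ∂(gaussianReal 0 v)
      = Real.exp (c ^ 2 * v / (2 * (1 - 2 * a * v))) / Real.sqrt (1 - 2 * a * v) := by
  have hvne : (v:ℝ) ≠ 0 := hv.ne'
  have hv0 : v ≠ 0 := by exact_mod_cast hvne
  have h2v : 0 < 2*(v:ℝ) := by linarith
  set q : ℝ := 1 - 2 * a * v with hq
  have hq0 : 0 < q := by rw [hq]; linarith
  have hb : a - (2*(v:ℝ))⁻¹ = -(q/(2*v)) := by rw [hq]; field_simp; ring
  have hb0 : a - (2*(v:ℝ))⁻¹ < 0 := by rw [hb]; exact neg_lt_zero.mpr (div_pos hq0 h2v)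
  rw [gaussianReal_of_var_ne_zero _ hv0]
  have hpdf : gaussianPDF 0 v = fun x => ((Real.toNNReal (gaussianPDFReal 0 v x) : ℝ≥0) : ℝ≥0∞) :=
    rfl
  rw [hpdf, integral_withDensity_eq_integral_smul ((measurable_gaussianPDFReal 0 v).real_toNNReal)]
  have heq : ∀ x, (Real.toNNReal (gaussianPDFReal 0 v x)) • Real.exp (a * x ^ 2 + c * x)
      = (Real.sqrt (2 * π * v))⁻¹ * Real.exp ((a - (2*(v:ℝ))⁻¹) * x ^ 2 + c * x) := by
    intro x
    rw [NNReal.smul_def, smul_eq_mul, Real.coe_toNNReal _ (gaussianPDFReal_nonneg 0 v x)]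
    exact pdf_mul_exp_eq hv a c x
  simp_rw [heq]
  rw [MeasureTheory.integral_const_mul, integral_exp_quadratic_real hb0 c]
  have h1 : π / -(a - (2*(v:ℝ))⁻¹) = 2 * π * v / q := by
    rw [hb]; field_simp
  have h2 : -c ^ 2 / (4 * (a - (2*(v:ℝ))⁻¹)) = c ^ 2 * v / (2 * q) := by
    rw [hb]; field_simp; ring
  have hs : Real.sqrt (2 * π * v) ≠ 0 := by positivity
  rw [h1, h2, Real.sqrt_div (by positivity) q]
  field_simp

lemma integrable_of_bounded_one {X : Type*} [MeasurableSpace X] (μ : Measure X)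
    [IsProbabilityMeasure μ] {f : X → ℝ} (hf : AEStronglyMeasurable f μ)
    (hb : ∀ x, ‖f x‖ ≤ 1) : Integrable f μ :=
  Integrable.mono' (integrable_const 1) hf (Filter.Eventually.of_forall hb)

lemma exp_neg_le_one {t : ℝ} (ht : 0 ≤ t) : ‖Real.exp (-t)‖ ≤ 1 := by
  rw [Real.norm_eq_abs, abs_of_pos (Real.exp_pos _)]
  rw [show (1:ℝ) = Real.exp 0 by simp]
  exact Real.exp_le_exp.mpr (by linarith)

lemma integrable_gauss_sq {w : ℝ≥0} (hw : 0 < (w:ℝ)) {α : ℝ} (hα : 0 < α) (a : ℝ) :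
    Integrable (fun b => Real.exp (-α * (a - b) ^ 2)) (gaussianReal 0 w) := by
  have hrw : ∀ b : ℝ, Real.exp (-α * (a - b) ^ 2)
      = Real.exp (-α * a ^ 2) * Real.exp ((-α) * b ^ 2 + (2 * α * a) * b) := by
    intro b; rw [← Real.exp_add]; congr 1; ring
  simp_rw [hrw]
  exact (integrable_exp_quadratic_gaussian hw _ (by nlinarith)).const_mul _

lemma integral_gauss_sq {w : ℝ≥0} (hw : 0 < (w:ℝ)) {α : ℝ} (hα : 0 < α) (a : ℝ) :
    ∫ b, Real.exp (-α * (a - b) ^ 2) ∂(gaussianReal 0 w)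
      = Real.exp (-(α / (1 + 2 * α * w)) * a ^ 2) / Real.sqrt (1 + 2 * α * w) := by
  have hq : (0:ℝ) < 1 + 2 * α * w := by nlinarith
  have hrw : ∀ b : ℝ, Real.exp (-α * (a - b) ^ 2)
      = Real.exp (-α * a ^ 2) * Real.exp ((-α) * b ^ 2 + (2 * α * a) * b) := by
    intro b; rw [← Real.exp_add]; congr 1; ring
  simp_rw [hrw]
  rw [MeasureTheory.integral_const_mul,
    integral_exp_quadratic_gaussian hw _ (by nlinarith : 2 * (-α) * (w:ℝ) < 1)]
  have h1 : 1 - 2 * (-α) * (w:ℝ) = 1 + 2 * α * w := by ring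
  rw [h1, div_eq_mul_inv, div_eq_mul_inv, ← mul_assoc, ← Real.exp_add]
  congr 2
  field_simp
  ring

lemma inner_c {v : ℝ≥0} (hv : 0 < (v:ℝ)) (a b : ℝ) :
    ∫ c, Real.exp (-(4*(v:ℝ))⁻¹ * ((a + c - b) ^ 2 - c ^ 2)) ∂(gaussianReal 0 v)
      = Real.exp (-(8*(v:ℝ))⁻¹ * (a - b) ^ 2) := by
  have hvne : (v:ℝ) ≠ 0 := hv.ne'
  have hrw : ∀ c : ℝ, Real.exp (-(4*(v:ℝ))⁻¹ * ((a + c - b) ^ 2 - c ^ 2))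
      = Real.exp (-(4*(v:ℝ))⁻¹ * (a - b) ^ 2)
        * Real.exp (0 * c ^ 2 + (-2 * (4*(v:ℝ))⁻¹ * (a - b)) * c) := by
    intro c; rw [← Real.exp_add]; congr 1; ring
  simp_rw [hrw]
  rw [MeasureTheory.integral_const_mul,
    integral_exp_quadratic_gaussian hv _ (by norm_num : 2 * (0:ℝ) * (v:ℝ) < 1)]
  have h1 : 1 - 2 * (0:ℝ) * (v:ℝ) = 1 := by ring
  rw [h1, Real.sqrt_one, div_one, ← Real.exp_add]
  congr 1
  field_simp
  ring

lemma integrable_inner_c {v : ℝ≥0} (hv : 0 < (v:ℝ)) (a b : ℝ) :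
    Integrable (fun c => Real.exp (-(4*(v:ℝ))⁻¹ * ((a + c - b) ^ 2 - c ^ 2)))
      (gaussianReal 0 v) := by
  have hrw : ∀ c : ℝ, Real.exp (-(4*(v:ℝ))⁻¹ * ((a + c - b) ^ 2 - c ^ 2))
      = Real.exp (-(4*(v:ℝ))⁻¹ * (a - b) ^ 2)
        * Real.exp (0 * c ^ 2 + (-2 * (4*(v:ℝ))⁻¹ * (a - b)) * c) := by
    intro c; rw [← Real.exp_add]; congr 1; ring
  simp_rw [hrw]
  exact (integrable_exp_quadratic_gaussian hv _ (by norm_num)).const_mul _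

noncomputable def gcore (v : ℝ≥0) : (ℝ × ℝ) × ℝ → ℝ :=
  fun p => Real.exp (-(4*(v:ℝ))⁻¹ * ((p.1.1 + p.2 - p.1.2) ^ 2 - p.2 ^ 2))

lemma gcore_meas {v : ℝ≥0} : Measurable (gcore v) := by
  unfold gcore; fun_prop

lemma integrable_hcore {v w : ℝ≥0} :
    Integrable (fun p : ℝ × ℝ => Real.exp (-(8*(v:ℝ))⁻¹ * (p.1 - p.2) ^ 2))
      ((gaussianReal 0 w).prod (gaussianReal 0 w)) := by
  refine integrable_of_bounded_one _ ((?_ : Measurable _).aestronglyMeasurable) (fun p => ?_)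
  · fun_prop
  · rw [show -(8*(v:ℝ))⁻¹ * (p.1 - p.2) ^ 2 = -((8*(v:ℝ))⁻¹ * (p.1 - p.2) ^ 2) by ring]
    exact exp_neg_le_one (by positivity)

lemma integrable_gcore {v w : ℝ≥0} (hv : 0 < (v:ℝ)) (hw : 0 < (w:ℝ)) :
    Integrable (gcore v) (((gaussianReal 0 w).prod (gaussianReal 0 w)).prod
    (gaussianReal 0 v)) := by
  rw [MeasureTheory.integrable_prod_iff (gcore_meas.aestronglyMeasurable)]
  constructor
  · exact Filter.Eventually.of_forall fun x => integrable_inner_c hv x.1 x.2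
  · have heq : ∀ x : ℝ × ℝ, (∫ c, ‖gcore v (x, c)‖ ∂(gaussianReal 0 v))
        = Real.exp (-(8*(v:ℝ))⁻¹ * (x.1 - x.2) ^ 2) := by
      intro x
      rw [← inner_c hv x.1 x.2]
      congr 1 with c
      simp only [gcore, Real.norm_eq_abs]
      exact abs_of_pos (Real.exp_pos _)
    simp_rw [heq]
    exact integrable_hcore

lemma integral_gcore {v w : ℝ≥0} (hv : 0 < (v:ℝ)) (hw : 0 < (w:ℝ)) :
    ∫ p, gcore v p ∂(((gaussianReal 0 w).prod (gaussianReal 0 w)).prod (gaussianReal 0 v))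
      = (Real.sqrt (1 + (w:ℝ) / (2 * v)))⁻¹ := by
  have hvne : (v:ℝ) ≠ 0 := hv.ne'
  have hal : (0:ℝ) < (8*(v:ℝ))⁻¹ := by positivity
  set α : ℝ := (8*(v:ℝ))⁻¹ with hα
  have hq1 : (0:ℝ) < 1 + 2 * α * w := by nlinarith
  rw [MeasureTheory.integral_prod _ (integrable_gcore hv hw)]
  have h1 : ∀ x : ℝ × ℝ, (∫ c, gcore v (x, c) ∂(gaussianReal 0 v))
      = Real.exp (-α * (x.1 - x.2) ^ 2) := fun x => inner_c hv x.1 x.2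
  simp_rw [h1]
  rw [MeasureTheory.integral_prod _ integrable_hcore]
  have h2 : ∀ a : ℝ, (∫ b, Real.exp (-α * (a - b) ^ 2) ∂(gaussianReal 0 w))
      = Real.exp (-(α / (1 + 2 * α * w)) * a ^ 2) / Real.sqrt (1 + 2 * α * w) :=
    integral_gauss_sq hw hal
  simp_rw [← hα, h2]
  rw [MeasureTheory.integral_div]
  have hb1 : (0:ℝ) < α / (1 + 2 * α * w) := div_pos hal hq1
  have hrw2 : ∀ a : ℝ, Real.exp (-(α / (1 + 2 * α * ↑w)) * a ^ 2)
      = Real.exp ((-(α / (1 + 2 * α * ↑w))) * a ^ 2 + 0 * a) := by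
    intro a; congr 1; ring
  simp_rw [hrw2]
  rw [integral_exp_quadratic_gaussian hw 0 (by nlinarith : 2 * (-(α / (1 + 2 * α * ↑w))) * (w:ℝ) < 1)]
  rw [show (0:ℝ) ^ 2 * (w:ℝ) / (2 * (1 - 2 * (-(α / (1 + 2 * α * ↑w))) * ↑w)) = 0 by ring,
    Real.exp_zero]
  have h4 : 1 - 2 * (-(α / (1 + 2 * α * ↑w))) * (w:ℝ) = 1 + 2 * (α / (1 + 2 * α * ↑w)) * w := by
    ring
  rw [h4]
  have hq2 : (0:ℝ) < 1 + 2 * (α / (1 + 2 * α * ↑w)) * w := by positivity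
  rw [one_div, div_eq_mul_inv, ← mul_inv, ← Real.sqrt_mul hq2.le]
  congr 1
  rw [hα]
  field_simp
  congr 1
  ring
lemma gcore_def (v : ℝ≥0) : gcore v
    = fun p => Real.exp (-(4*(v:ℝ))⁻¹ * ((p.1.1 + p.2 - p.1.2) ^ 2 - p.2 ^ 2)) := rfl


variable {Ω ι ι' : Type*} [MeasurableSpace Ω] {μ : Measure Ω}

/-- restriction/extension of a tuple indexed by a finset -/
noncomputable def extFn [DecidableEq ι] (s : Finset ι) (x : ({i // i ∈ s} → ℝ)) (i : ι) : ℝ :=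
  if h : i ∈ s then x ⟨i, h⟩ else 0

lemma measurable_extFn [DecidableEq ι] (s : Finset ι) (i : ι) :
    Measurable (fun x : ({i // i ∈ s} → ℝ) => extFn s x i) := by
  unfold extFn
  by_cases h : i ∈ s
  · simp only [dif_pos h]; exact measurable_pi_apply _
  · simp only [dif_neg h]; exact measurable_const

lemma iIndepFun_group [DecidableEq ι] {f : ι → Ω → ℝ}
    (hindep : iIndepFun f μ)
    (hf : ∀ i, Measurable (f i))
    (κ : ι' → Fin 3 → ι) (hκ : ∀ (t t' : ι') (k k' : Fin 3), κ t k = κ t' k' → t = t')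
    (g : ι' → (Fin 3 → ℝ) → ℝ) (hg : ∀ t, Measurable (g t)) :
    iIndepFun (fun t ω => g t (fun k => f (κ t k) ω)) μ := by
  classical
  rw [iIndepFun_iff_measure_inter_preimage_eq_mul]
  intro S
  induction S using Finset.induction_on with
  | empty =>
    intro sets _
    have : IsProbabilityMeasure μ := hindep.isProbabilityMeasure
    simp
  | @insert t S' htS' ih =>
    intro sets hsets
    rw [Finset.set_biInter_insert, Finset.prod_insert htS',
      ← ih (fun i hi => hsets i (Finset.mem_insert_of_mem hi))]
    -- independence of the t-block from the S'-blocks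
    set Tf : Finset ι := Finset.image (κ t) Finset.univ with hTf
    set Sf : Finset ι := S'.biUnion (fun u => Finset.image (κ u) Finset.univ) with hSf
    have hdisj : Disjoint Tf Sf := by
      rw [Finset.disjoint_left]
      rintro i hiT hiS
      rw [hTf, Finset.mem_image] at hiT
      obtain ⟨k, -, hk⟩ := hiT
      rw [hSf, Finset.mem_biUnion] at hiS
      obtain ⟨u, huS, hu⟩ := hiS
      rw [Finset.mem_image] at hu
      obtain ⟨k', -, hk'⟩ := hu
      exact htS' (hκ t u k k' (hk.trans hk'.symm) ▸ huS)
    have hIF := hindep.indepFun_finset Tf Sf hdisj hf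
    set C : Set ({i // i ∈ Tf} → ℝ) :=
      (fun x => g t (fun k => extFn Tf x (κ t k))) ⁻¹' (sets t) with hC
    set D : Set ({i // i ∈ Sf} → ℝ) :=
      ⋂ u ∈ S', (fun x => g u (fun k => extFn Sf x (κ u k))) ⁻¹' (sets u) with hD
    have hCmeas : MeasurableSet C :=
      ((hg t).comp (measurable_pi_lambda _ fun k => measurable_extFn Tf (κ t k)))
        (hsets t (Finset.mem_insert_self _ _))
    have hDmeas : MeasurableSet D := by
      refine MeasurableSet.biInter S'.countable_toSet fun u hu => ?_
      exact ((hg u).comp (measurable_pi_lambda _ fun k => measurable_extFn Sf (κ u k)))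
        (hsets u (Finset.mem_insert_of_mem hu))
    have hmemT : ∀ k, κ t k ∈ Tf := fun k => Finset.mem_image_of_mem _ (Finset.mem_univ k)
    have hmemS : ∀ u ∈ S', ∀ k, κ u k ∈ Sf := fun u hu k =>
      Finset.mem_biUnion.mpr ⟨u, hu, Finset.mem_image_of_mem _ (Finset.mem_univ k)⟩
    have hUC : (fun a (i : {i // i ∈ Tf}) => f i a) ⁻¹' C
        = (fun ω => g t (fun k => f (κ t k) ω)) ⁻¹' (sets t) := by
      ext ω
      simp only [Set.mem_preimage, hC]
      have : (fun k => extFn Tf (fun i : {i // i ∈ Tf} => f i ω) (κ t k))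
          = fun k => f (κ t k) ω := funext fun k => by simp only [extFn, dif_pos (hmemT k)]
      rw [this]
    have hUD : (fun a (i : {i // i ∈ Sf}) => f i a) ⁻¹' D
        = ⋂ u ∈ S', (fun ω => g u (fun k => f (κ u k) ω)) ⁻¹' (sets u) := by
      ext ω
      simp only [Set.mem_preimage, hD, Set.mem_iInter]
      refine forall₂_congr fun u hu => ?_
      have : (fun k => extFn Sf (fun i : {i // i ∈ Sf} => f i ω) (κ u k))
          = fun k => f (κ u k) ω := funext fun k => by simp only [extFn, dif_pos (hmemS u hu k)]
      rw [this]
    have := hIF.measure_inter_preimage_eq_mul C D hCmeas hDmeas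
    rw [hUC, hUD] at this
    exact this


def kap {M T : ℕ} [NeZero M] (j : Fin M) (t : Fin T) (k : Fin 3) : (Fin M × Fin T) ⊕ Fin T :=
  if k = 0 then Sum.inl (0, t) else if k = 1 then Sum.inl (j, t) else Sum.inr t

lemma kap_inj {M T : ℕ} [NeZero M] (j : Fin M) (t t' : Fin T) (k k' : Fin 3)
    (h : kap j t k = kap j t' k') : t = t' := by
  unfold kap at h
  fin_cases k <;> fin_cases k' <;> simp_all [Prod.ext_iff] <;> tauto

lemma kap0 {M T : ℕ} [NeZero M] (j : Fin M) (t : Fin T) : kap j t 0 = Sum.inl (0, t) := by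
  unfold kap; rw [if_pos rfl]
lemma kap1 {M T : ℕ} [NeZero M] (j : Fin M) (t : Fin T) : kap j t 1 = Sum.inl (j, t) := by
  unfold kap; rw [if_neg (by decide), if_pos rfl]
lemma kap2 {M T : ℕ} [NeZero M] (j : Fin M) (t : Fin T) : kap j t 2 = Sum.inr t := by
  unfold kap; rw [if_neg (by decide), if_neg (by decide)]

noncomputable def g0fun : (Fin 3 → ℝ) → ℝ := fun y => (y 0 + y 2 - y 1) ^ 2 - (y 2) ^ 2

lemma g0fun_meas : Measurable g0fun := by unfold g0fun; fun_prop

/-- in the Gaussian signal model with `M ≥ 2` hypotheses and `T`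
observation times (signals `s i t` i.i.d. `N(0, ℰ²)`, noise `z t` i.i.d. `N(0, σ²)`,
all independent), with hypothesis 1 (index `0`) true, the maximum-likelihood
detector based on `y(t) = s_1(t) + z(t)` and knowledge of the signals (i.e. nearest
signal in Euclidean distance, ties broken against hypothesis 1) has error
probability at most `(M−1)(1 + SNR/2)^{−T/2}` with `SNR = ℰ²/σ²`. -/
theorem stmt_18 {M T : ℕ} (hM : 2 ≤ M) [NeZero M]
    (𝓔 σ : ℝ) (h𝓔 : 0 < 𝓔) (hσ : 0 < σ)
    {Ω : Type} [MeasurableSpace Ω] (μ : Measure Ω) [IsProbabilityMeasure μ]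
    (s : Fin M → Fin T → Ω → ℝ) (z : Fin T → Ω → ℝ)
    (hmeas_s : ∀ i t, Measurable (s i t)) (hmeas_z : ∀ t, Measurable (z t))
    (hindep : ProbabilityTheory.iIndepFun
      (Sum.elim (fun p : Fin M × Fin T => s p.1 p.2) z) μ)
    (hgs : ∀ i t, Measure.map (s i t) μ = gaussianReal 0 ⟨𝓔 ^ 2, sq_nonneg 𝓔⟩)
    (hgz : ∀ t, Measure.map (z t) μ = gaussianReal 0 ⟨σ ^ 2, sq_nonneg σ⟩) :
    (μ {ω | ∃ j : Fin M, j ≠ 0 ∧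
        ∑ t, (s 0 t ω + z t ω - s j t ω) ^ 2 ≤
          ∑ t, (s 0 t ω + z t ω - s 0 t ω) ^ 2}).toReal ≤
      ((M : ℝ) - 1) * (1 + (𝓔 ^ 2 / σ ^ 2) / 2) ^ (-(T : ℝ) / 2) := by
  classical
  set v : ℝ≥0 := ⟨σ ^ 2, sq_nonneg σ⟩ with hvdef
  set w : ℝ≥0 := ⟨𝓔 ^ 2, sq_nonneg 𝓔⟩ with hwdef
  have hσ2 : (v:ℝ) = σ ^ 2 := rfl
  have h𝓔2 : (w:ℝ) = 𝓔 ^ 2 := rfl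
  have hv : 0 < (v:ℝ) := by rw [hσ2]; positivity
  have hw : 0 < (w:ℝ) := by rw [h𝓔2]; positivity
  set F := Sum.elim (fun p : Fin M × Fin T => s p.1 p.2) z with hFdef
  have hFmeas : ∀ i, Measurable (F i) := by
    rintro (⟨i, t⟩ | t)
    · exact hmeas_s i t
    · exact hmeas_z t
  set K : ℝ := 1 + 𝓔 ^ 2 / σ ^ 2 / 2 with hKdef
  have hK0 : (0:ℝ) < K := by positivity
  have hKeq : 1 + (w:ℝ) / (2 * (v:ℝ)) = K := by
    rw [hKdef, h𝓔2, hσ2]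
    field_simp
  -- the per-hypothesis bound
  have key : ∀ j : Fin M, j ≠ 0 →
      (μ {ω | ∑ t, ((s 0 t ω + z t ω - s j t ω) ^ 2 - (z t ω) ^ 2) ≤ 0}).toReal ≤
        K ^ (-(T : ℝ) / 2) := by
    intro j hj
    set X : Fin T → Ω → ℝ :=
      fun t ω => (s 0 t ω + z t ω - s j t ω) ^ 2 - (z t ω) ^ 2 with hXdef
    have hXmeas : ∀ t, Measurable (X t) := fun t =>
      ((((hmeas_s 0 t).add (hmeas_z t)).sub (hmeas_s j t)).pow_const 2).sub
        ((hmeas_z t).pow_const 2)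
    -- independence of the X t across t
    have hXeq : (fun t ω => g0fun (fun k => F (kap j t k) ω)) = X := by
      funext t ω
      simp only [g0fun, kap0, kap1, kap2, hXdef]
      rfl
    have hXindep : iIndepFun X μ := by
      rw [← hXeq]
      exact iIndepFun_group hindep hFmeas (kap j) (kap_inj j) (fun _ => g0fun)
        (fun _ => g0fun_meas)
    -- per-t law of the triple and mgf computation
    have hVmap : ∀ t : Fin T,
        Measure.map (fun ω => ((s 0 t ω, s j t ω), z t ω)) μ
          = ((gaussianReal 0 w).prod (gaussianReal 0 w)).prod (gaussianReal 0 v) := by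
      intro t
      have hne : (Sum.inl ((0:Fin M), t) : (Fin M × Fin T) ⊕ Fin T) ≠ Sum.inl (j, t) := by
        simp [Prod.ext_iff]
        intro h
        exact hj h.symm
      have hpair : IndepFun (s 0 t) (s j t) μ := hindep.indepFun hne
      have hmap_pair : Measure.map (fun ω => (s 0 t ω, s j t ω)) μ
          = (gaussianReal 0 w).prod (gaussianReal 0 w) := by
        rw [(indepFun_iff_map_prod_eq_prod_map_map (hmeas_s 0 t).aemeasurable
          (hmeas_s j t).aemeasurable).mp hpair, hgs 0 t, hgs j t]
      have hpz : IndepFun (fun ω => (s 0 t ω, s j t ω)) (z t) μ :=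
        hindep.indepFun_prodMk hFmeas (Sum.inl (0, t)) (Sum.inl (j, t)) (Sum.inr t)
          (by simp) (by simp)
      rw [(indepFun_iff_map_prod_eq_prod_map_map
        ((hmeas_s 0 t).prodMk (hmeas_s j t)).aemeasurable
        (hmeas_z t).aemeasurable).mp hpz, hmap_pair, hgz t]
    have hVmeas : ∀ t : Fin T, Measurable (fun ω => ((s 0 t ω, s j t ω), z t ω)) :=
      fun t => ((hmeas_s 0 t).prodMk (hmeas_s j t)).prodMk (hmeas_z t)
    have hcomp : ∀ t : Fin T, (fun ω => Real.exp (-(4*(v:ℝ))⁻¹ * X t ω))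
        = (gcore v) ∘ (fun ω => ((s 0 t ω, s j t ω), z t ω)) := by
      intro t
      funext ω
      rw [gcore_def]
      rfl
    have hint : ∀ t : Fin T, Integrable (fun ω => Real.exp (-(4*(v:ℝ))⁻¹ * X t ω)) μ := by
      intro t
      rw [hcomp t]
      refine (integrable_map_measure gcore_meas.aestronglyMeasurable
        (hVmeas t).aemeasurable).mp ?_
      rw [hVmap t]
      exact integrable_gcore hv hw
    have hmgf : ∀ t : Fin T, mgf (X t) μ (-(4*(v:ℝ))⁻¹) = (Real.sqrt K)⁻¹ := by
      intro t
      rw [mgf]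
      have : (fun ω => Real.exp (-(4*(v:ℝ))⁻¹ * X t ω)) =
          (gcore v) ∘ (fun ω => ((s 0 t ω, s j t ω), z t ω)) := hcomp t
      calc ∫ ω, Real.exp (-(4*(v:ℝ))⁻¹ * X t ω) ∂μ
          = ∫ ω, ((gcore v) ∘ (fun ω => ((s 0 t ω, s j t ω), z t ω))) ω ∂μ := by rw [this]
        _ = ∫ p, gcore v p ∂(Measure.map (fun ω => ((s 0 t ω, s j t ω), z t ω)) μ) :=
            (MeasureTheory.integral_map (hVmeas t).aemeasurable
              gcore_meas.aestronglyMeasurable).symm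
        _ = (Real.sqrt (1 + (w:ℝ) / (2 * v)))⁻¹ := by rw [hVmap t]; exact integral_gcore hv hw
        _ = (Real.sqrt K)⁻¹ := by rw [hKeq]
    -- Chernoff
    have hlam : -(4*(v:ℝ))⁻¹ ≤ 0 := by
      rw [neg_nonpos]
      positivity
    have hintsum : Integrable
        (fun ω => Real.exp (-(4*(v:ℝ))⁻¹ * (∑ t, X t) ω)) μ :=
      hXindep.integrable_exp_mul_sum hXmeas (fun t _ => hint t)
    have hcher := measure_le_le_exp_mul_mgf (μ := μ) (X := ∑ t, X t)
      (t := -(4*(v:ℝ))⁻¹) 0 hlam hintsum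
    rw [mul_zero, Real.exp_zero, one_mul] at hcher
    have hset : {ω | (∑ t, X t) ω ≤ 0} = {ω | ∑ t, ((s 0 t ω + z t ω - s j t ω) ^ 2
        - (z t ω) ^ 2) ≤ 0} := by
      ext ω
      simp [Finset.sum_apply, hXdef]
    rw [hset] at hcher
    refine hcher.trans (le_of_eq ?_)
    rw [hXindep.mgf_sum hXmeas Finset.univ]
    calc (∏ t : Fin T, mgf (X t) μ (-(4*(v:ℝ))⁻¹))
        = ∏ _t : Fin T, (Real.sqrt K)⁻¹ := Finset.prod_congr rfl fun t _ => hmgf t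
      _ = ((Real.sqrt K)⁻¹) ^ T := by rw [Finset.prod_const, Finset.card_univ, Fintype.card_fin]
      _ = K ^ (-(T : ℝ) / 2) := by
          rw [Real.sqrt_eq_rpow, ← Real.rpow_neg hK0.le, ← Real.rpow_natCast (K ^ (-(1/2:ℝ))) T,
            ← Real.rpow_mul hK0.le]
          congr 1
          ring
  -- union bound
  have hEset : {ω | ∃ j : Fin M, j ≠ 0 ∧
      ∑ t, (s 0 t ω + z t ω - s j t ω) ^ 2 ≤ ∑ t, (s 0 t ω + z t ω - s 0 t ω) ^ 2}
      = ⋃ j ∈ Finset.univ.erase (0 : Fin M),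
        {ω | ∑ t, ((s 0 t ω + z t ω - s j t ω) ^ 2 - (z t ω) ^ 2) ≤ 0} := by
    ext ω
    simp only [Set.mem_setOf_eq, Set.mem_iUnion, Finset.mem_erase, Finset.mem_univ, and_true,
      exists_prop]
    have hzrw : ∀ t : Fin T, (s 0 t ω + z t ω - s 0 t ω) ^ 2 = (z t ω) ^ 2 := fun t => by ring
    constructor
    · rintro ⟨j, hj, hle⟩
      refine ⟨j, hj, ?_⟩
      rw [Finset.sum_sub_distrib, sub_nonpos]
      simp_rw [hzrw] at hle
      exact hle
    · rintro ⟨j, hj, hle⟩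
      refine ⟨j, hj, ?_⟩
      rw [Finset.sum_sub_distrib, sub_nonpos] at hle
      simp_rw [hzrw]
      exact hle
  rw [hEset]
  have hsum_le := measure_biUnion_finset_le (μ := μ) (Finset.univ.erase (0 : Fin M))
    (fun j => {ω | ∑ t, ((s 0 t ω + z t ω - s j t ω) ^ 2 - (z t ω) ^ 2) ≤ 0})
  have hne_top : (∑ j ∈ Finset.univ.erase (0 : Fin M),
      μ {ω | ∑ t, ((s 0 t ω + z t ω - s j t ω) ^ 2 - (z t ω) ^ 2) ≤ 0}) ≠ ⊤ :=
    (ENNReal.sum_lt_top.mpr fun j _ => measure_lt_top μ _).ne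
  refine le_trans (ENNReal.toReal_mono hne_top hsum_le) ?_
  rw [ENNReal.toReal_sum (fun j _ => measure_ne_top μ _)]
  refine le_trans (Finset.sum_le_sum fun j hj =>
    key j (Finset.mem_erase.mp hj).1) ?_
  rw [Finset.sum_const, Finset.card_erase_of_mem (Finset.mem_univ _), Finset.card_univ,
    Fintype.card_fin, nsmul_eq_mul]
  have : ((M - 1 : ℕ) : ℝ) = (M : ℝ) - 1 := by
    rw [Nat.cast_sub (by omega)]
    norm_num
  rw [this]
end
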